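/- Let f*: ℝ^d → ℝ be a differentiable convex function and x_0, …, x_d ∈ ℝ^d be d+1 points with ‖x_i‖₂ = 1 for all i, such that the origin 0 lies in the interior of conv{x_0,…,x_d}. For each i let X_i be the d×d matrix whose rows are the x_j with j ≠ i, and let v_i be the unique point satisfying v_i · x_j = ∇f*(x_j) · x_j for all j ≠ i. Then for all i, j the distance between vertices satisfies ‖v_i − v_j‖₂ ≤ (‖X_i^{-1}‖ + ‖X_j^{-1}‖) · C, where C = max_{k,l = 0,…,d} ‖∇f*(x_k) − ∇f*(x_l)‖₂ and ‖X_i^{-1}‖ denotes the operator norm of X_i^{-1} as a linear map from (ℝ^d, ‖·‖_∞) to (ℝ^d, ‖·‖₂). -/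

import Mathlib

lemma statement7_key {d : ℕ} {κ : Type} [Fintype κ]
    (e : (κ → ℝ) ≃L[ℝ] EuclideanSpace ℝ (Fin d))
    (a : EuclideanSpace ℝ (Fin d)) (C : ℝ) (hC : 0 ≤ C)
    (h : ∀ k, ‖e.symm a k‖ ≤ C) :
    ‖a‖ ≤ ‖(e : (κ → ℝ) →L[ℝ] EuclideanSpace ℝ (Fin d))‖ * C := by
  calc ‖a‖ = ‖e (e.symm a)‖ := by rw [e.apply_symm_apply]
    _ ≤ ‖(e : (κ → ℝ) →L[ℝ] EuclideanSpace ℝ (Fin d))‖ * ‖e.symm a‖ :=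
        (e : (κ → ℝ) →L[ℝ] EuclideanSpace ℝ (Fin d)).le_opNorm _
    _ ≤ _ := mul_le_mul_of_nonneg_left ((pi_norm_le_iff_of_nonneg hC).mpr h)
        (norm_nonneg _)

theorem statement7 (d : ℕ)
    (f : EuclideanSpace ℝ (Fin d) → ℝ)
    (hf : ConvexOn ℝ Set.univ f) (hdf : Differentiable ℝ f)
    (x : Fin (d + 1) → EuclideanSpace ℝ (Fin d))
    (hnorm : ∀ i, ‖x i‖ = 1)
    (hx : (0 : EuclideanSpace ℝ (Fin d)) ∈ interior (convexHull ℝ (Set.range x)))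
    (i j : Fin (d + 1))
    (ei : ({k : Fin (d + 1) // k ≠ i} → ℝ) ≃L[ℝ] EuclideanSpace ℝ (Fin d))
    (hei : ∀ (w : EuclideanSpace ℝ (Fin d)) (k : {k : Fin (d + 1) // k ≠ i}),
      ei.symm w k = (inner ℝ (x (k : Fin (d + 1))) w : ℝ))
    (ej : ({k : Fin (d + 1) // k ≠ j} → ℝ) ≃L[ℝ] EuclideanSpace ℝ (Fin d))
    (hej : ∀ (w : EuclideanSpace ℝ (Fin d)) (k : {k : Fin (d + 1) // k ≠ j}),
      ej.symm w k = (inner ℝ (x (k : Fin (d + 1))) w : ℝ))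
    (v : Fin (d + 1) → EuclideanSpace ℝ (Fin d))
    (hv : ∀ l k, k ≠ l →
      (inner ℝ (v l) (x k) : ℝ) = inner ℝ (gradient f (x k)) (x k)) :
    ‖v i - v j‖ ≤
      (‖(ei : ({k : Fin (d + 1) // k ≠ i} → ℝ) →L[ℝ] EuclideanSpace ℝ (Fin d))‖ +
       ‖(ej : ({k : Fin (d + 1) // k ≠ j} → ℝ) →L[ℝ] EuclideanSpace ℝ (Fin d))‖) *
        Finset.univ.sup' Finset.univ_nonempty
          (fun p : Fin (d + 1) × Fin (d + 1) =>
            ‖gradient f (x p.1) - gradient f (x p.2)‖) := by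
  set C := Finset.univ.sup' Finset.univ_nonempty
      (fun p : Fin (d + 1) × Fin (d + 1) =>
        ‖gradient f (x p.1) - gradient f (x p.2)‖) with hCdef
  set g := gradient f (x j) with hg
  have hC0 : (0 : ℝ) ≤ C := by
    have h := Finset.le_sup' (f := fun p : Fin (d + 1) × Fin (d + 1) =>
      ‖gradient f (x p.1) - gradient f (x p.2)‖) (Finset.mem_univ (j, j))
    simp only [sub_self, norm_zero] at h
    exact h
  have coord : ∀ (l : Fin (d+1)) (k : Fin (d+1)), k ≠ l →
      ‖(inner ℝ (x k) (v l - g) : ℝ)‖ ≤ C := by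
    intro l k hk
    have h2 : (inner ℝ (x k) (v l) : ℝ) = inner ℝ (gradient f (x k)) (x k) := by
      rw [real_inner_comm]; exact hv l k hk
    have h3 : (inner ℝ (x k) g : ℝ) = inner ℝ g (x k) := real_inner_comm _ _
    have h1 : (inner ℝ (x k) (v l - g) : ℝ) = inner ℝ (gradient f (x k) - g) (x k) := by
      rw [inner_sub_right, inner_sub_left, h2, h3]
    rw [h1]
    calc ‖(inner ℝ (gradient f (x k) - g) (x k) : ℝ)‖
        ≤ ‖gradient f (x k) - g‖ * ‖x k‖ := norm_inner_le_norm _ _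
      _ = ‖gradient f (x k) - g‖ := by rw [hnorm k, mul_one]
      _ ≤ C := Finset.le_sup' (f := fun p : Fin (d + 1) × Fin (d + 1) =>
            ‖gradient f (x p.1) - gradient f (x p.2)‖) (Finset.mem_univ (k, j))
  have hi : ‖v i - g‖ ≤ ‖(ei : ({k : Fin (d + 1) // k ≠ i} → ℝ) →L[ℝ]
      EuclideanSpace ℝ (Fin d))‖ * C := by
    refine statement7_key ei _ C hC0 ?_
    intro k
    rw [hei]
    exact coord i k k.2
  have hj : ‖v j - g‖ ≤ ‖(ej : ({k : Fin (d + 1) // k ≠ j} → ℝ) →L[ℝ]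
      EuclideanSpace ℝ (Fin d))‖ * C := by
    refine statement7_key ej _ C hC0 ?_
    intro k
    rw [hej]
    exact coord j k k.2
  calc ‖v i - v j‖ ≤ ‖v i - g‖ + ‖v j - g‖ := by
        have := norm_sub_le (v i - g) (v j - g)
        simpa [sub_sub_sub_cancel_right] using this
    _ ≤ _ := by rw [add_mul]; exact add_le_add hi hj
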